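/- arXiv:1607.02189 — 11 statements merged into one kernel-verified Lean document; each statement's English description precedes it below -/
import Mathlib

section
/- Let W be a set with exactly three distinct elements a, b, c, and let π : Set W → Set (Set W) satisfy conditions (CJ1)–(CJ4). Suppose the conditional obligation O({a} | W) holds, i.e., for every X ⊆ W with a ∈ X one has {a} ∈ π(X). Then condition (CJ5) fails: it is NOT the case that for all X, Y, Z ⊆ W, if Z ∈ π(X), Y ⊆ X and Y ∩ Z ≠ ∅ then Z ∈ π(Y). -/
/-- In a three-element world with π satisfying (CJ1)–(CJ4) and the
conditional obligation O({a} | W) (i.e., {a} ∈ π(X) for every X containing a),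
condition (CJ5) fails. -/
theorem cj5_fails_in_three_point_model {W : Type} (a b c : W)
    (hab : a ≠ b) (hac : a ≠ c) (hbc : b ≠ c)
    (hcover : ∀ w : W, w = a ∨ w = b ∨ w = c)
    (π : Set W → Set (Set W))
    (cj1 : ∀ X : Set W, (∅ : Set W) ∉ π X)
    (cj2 : ∀ X Y Z : Set W, Y ∩ X = Z ∩ X → (Y ∈ π X ↔ Z ∈ π X))
    (cj3 : ∀ X Y Z : Set W, Y ∈ π X → Z ∈ π X → Y ∩ Z ∈ π X)
    (cj4 : ∀ X Y Z : Set W, X ⊆ Y → Y ⊆ Z → X ∈ π Y → (Z \ Y) ∪ X ∈ π Z)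
    (hO : ∀ X : Set W, a ∈ X → ({a} : Set W) ∈ π X) :
    ¬ (∀ X Y Z : Set W, Z ∈ π X → Y ⊆ X → Y ∩ Z ≠ ∅ → Z ∈ π Y) := by
  intro h
  -- {a} ∈ π({a,c}) and {a} ∈ π({a,b})
  have h1 : ({a} : Set W) ∈ π {a, c} := hO _ (by simp)
  have h2 : ({a} : Set W) ∈ π {a, b} := hO _ (by simp)
  -- via CJ4: (univ \ {a,c}) ∪ {a} ∈ π univ, and it equals {a,b}
  have e1 : (Set.univ \ ({a, c} : Set W)) ∪ {a} = {a, b} := by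
    ext w
    rcases hcover w with rfl | rfl | rfl <;>
      simp [hab, hac, hbc, hab.symm, hac.symm, hbc.symm]
  have e2 : (Set.univ \ ({a, b} : Set W)) ∪ {a} = {a, c} := by
    ext w
    rcases hcover w with rfl | rfl | rfl <;>
      simp [hab, hac, hbc, hab.symm, hac.symm, hbc.symm]
  have hz1 : ({a, b} : Set W) ∈ π Set.univ := by
    have := cj4 {a} {a, c} Set.univ (by simp) (by simp) h1
    rwa [e1] at this
  have hz2 : ({a, c} : Set W) ∈ π Set.univ := by
    have := cj4 {a} {a, b} Set.univ (by simp) (by simp) h2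
    rwa [e2] at this
  -- via CJ5 push into π({b,c})
  have hy1 : ({a, b} : Set W) ∈ π {b, c} := by
    refine h Set.univ {b, c} {a, b} hz1 (by simp) ?_
    intro hemp
    have : b ∈ (({b, c} : Set W) ∩ {a, b}) := by simp
    rw [hemp] at this; exact this
  have hy2 : ({a, c} : Set W) ∈ π {b, c} := by
    refine h Set.univ {b, c} {a, c} hz2 (by simp) ?_
    intro hemp
    have : c ∈ (({b, c} : Set W) ∩ {a, c}) := by simp
    rw [hemp] at this; exact this
  have hint : (({a, b} : Set W) ∩ {a, c}) ∈ π {b, c} := cj3 _ _ _ hy1 hy2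
  have eint : (({a, b} : Set W) ∩ {a, c}) = {a} := by
    ext w
    rcases hcover w with rfl | rfl | rfl <;>
      simp [hab, hac, hbc, hab.symm, hac.symm, hbc.symm]
  rw [eint] at hint
  have : (∅ : Set W) ∈ π {b, c} := by
    rw [cj2 {b, c} ∅ {a} (by
      ext w
      rcases hcover w with rfl | rfl | rfl <;>
        simp [hab, hac, hbc, hab.symm, hac.symm, hbc.symm])]
    exact hint
  exact cj1 _ this
end

section
/- Let W be a set with exactly three distinct elements a, b, c, and let π : Set W → Set (Set W) satisfy conditions (CJ1)–(CJ4). Suppose that for every X ⊆ W with a ∈ X one has {a} ∈ π(X) (i.e., the conditional obligation O({a} | W) holds). Then for every X ⊆ W with a ∈ X, π(X) equals the set of all Y ⊆ W with a ∈ Y (that is, π(X) = U({a}), the collection of supersets of {a}). -/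
/-- In a three-element world with π satisfying (CJ1)–(CJ4) and the
conditional obligation O({a} | W), for every X containing a, π(X) equals the
collection U({a}) of all supersets of {a}. -/
theorem pi_eq_supersets_in_three_point_model {W : Type} (a b c : W)
    (hab : a ≠ b) (hac : a ≠ c) (hbc : b ≠ c)
    (hcover : ∀ w : W, w = a ∨ w = b ∨ w = c)
    (π : Set W → Set (Set W))
    (cj1 : ∀ X : Set W, (∅ : Set W) ∉ π X)
    (cj2 : ∀ X Y Z : Set W, Y ∩ X = Z ∩ X → (Y ∈ π X ↔ Z ∈ π X))
    (cj3 : ∀ X Y Z : Set W, Y ∈ π X → Z ∈ π X → Y ∩ Z ∈ π X)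
    (cj4 : ∀ X Y Z : Set W, X ⊆ Y → Y ⊆ Z → X ∈ π Y → (Z \ Y) ∪ X ∈ π Z)
    (hO : ∀ X : Set W, a ∈ X → ({a} : Set W) ∈ π X) :
    ∀ X : Set W, a ∈ X → π X = {Y : Set W | ({a} : Set W) ⊆ Y} := by
  intro X haX
  -- Key: every S with a ∈ S ⊆ X lies in π X.
  have key : ∀ S : Set W, a ∈ S → S ⊆ X → S ∈ π X := by
    intro S haS hSX
    set S' : Set W := (X \ S) ∪ {a} with hS'
    have haS' : a ∈ S' := Or.inr rfl
    have h1 : ({a} : Set W) ⊆ S' := by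
      intro x hx; simp only [Set.mem_singleton_iff] at hx; subst hx; exact haS'
    have h2 : S' ⊆ X := by
      intro x hx
      rcases hx with hx | hx
      · exact hx.1
      · simp only [Set.mem_singleton_iff] at hx; subst hx; exact haX
    have h3 := cj4 {a} S' X h1 h2 (hO S' haS')
    have heq : (X \ S') ∪ {a} = S := by
      ext x
      simp only [Set.mem_union, Set.mem_diff, Set.mem_singleton_iff, hS']
      constructor
      · rintro (⟨hxX, hx⟩ | rfl)
        · by_contra hxS
          exact hx (Or.inl ⟨hxX, hxS⟩)
        · exact haS
      · intro hxS
        by_cases hxa : x = a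
        · exact Or.inr hxa
        · exact Or.inl ⟨hSX hxS, fun h => by
            rcases h with ⟨_, h⟩ | h
            · exact h hxS
            · exact hxa h⟩
    rwa [heq] at h3
  ext Y
  constructor
  · intro hY
    have haY' : a ∈ Y := by
      by_contra haY
      have h := cj3 X Y {a} hY (hO X haX)
      have : Y ∩ {a} = (∅ : Set W) := by
        ext z
        simp only [Set.mem_inter_iff, Set.mem_singleton_iff, Set.mem_empty_iff_false]
        exact ⟨fun ⟨hz, hza⟩ => haY (hza ▸ hz), False.elim⟩
      rw [this] at h
      exact cj1 X h
    intro x hx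
    simp only [Set.mem_singleton_iff] at hx
    subst hx; exact haY'
  · intro hY
    have haY : a ∈ Y := hY rfl
    have hS : Y ∩ X ∈ π X := key (Y ∩ X) ⟨haY, haX⟩ Set.inter_subset_right
    exact (cj2 X Y (Y ∩ X) (by rw [Set.inter_assoc, Set.inter_self])).mpr hS
end

section
/- There exist a set W with exactly two distinct elements w and y, functions av, pv : W → Set W satisfying v ∈ av(v) and av(v) ⊆ pv(v) for every v ∈ W, a map π : Set W → Set (Set W) satisfying conditions (CJ1)–(CJ4), and sets A, B ⊆ W, such that the conditional obligation O(B | A) holds, pv(w) ∩ A ≠ ∅, and pv(w) ∩ B = ∅. In particular, the schema O(B|A) ∧ ◇A → ◇B is not valid in CJ models (Ought does not imply potential possibility). -/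
open scoped Classical

noncomputable def cjBest (X : Set Bool) : Set Bool :=
  if true ∈ X then {true} else X

lemma cjBest_subset (X : Set Bool) : cjBest X ⊆ X := by
  unfold cjBest; split
  · intro a ha; simp at ha; subst ha; assumption
  · exact fun a ha => ha

lemma cjBest_nonempty {X : Set Bool} (h : X.Nonempty) : (cjBest X).Nonempty := by
  unfold cjBest; split
  · exact ⟨true, rfl⟩
  · exact h

noncomputable def cjPi (X : Set Bool) : Set (Set Bool) :=
  {Y | X.Nonempty ∧ cjBest X ⊆ Y ∩ X}

/-- There is a two-world CJ model in which O(B | A) holds, A is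
potentially possible at w, but B is not: Ought does not imply potential
possibility. -/
theorem exists_cj_countermodel_ought_implies_can :
    ∃ (W : Type) (w y : W), w ≠ y ∧ (∀ v : W, v = w ∨ v = y) ∧
      ∃ (av pv : W → Set W) (π : Set W → Set (Set W)) (A B : Set W),
        (∀ v : W, v ∈ av v) ∧ (∀ v : W, av v ⊆ pv v) ∧
        (∀ X : Set W, (∅ : Set W) ∉ π X) ∧
        (∀ X Y Z : Set W, Y ∩ X = Z ∩ X → (Y ∈ π X ↔ Z ∈ π X)) ∧
        (∀ X Y Z : Set W, Y ∈ π X → Z ∈ π X → Y ∩ Z ∈ π X) ∧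
        (∀ X Y Z : Set W, X ⊆ Y → Y ⊆ Z → X ∈ π Y → (Z \ Y) ∪ X ∈ π Z) ∧
        (A ∩ B ≠ ∅ ∧ ∀ X : Set W, X ⊆ A → X ∩ B ≠ ∅ → B ∈ π X) ∧
        pv w ∩ A ≠ ∅ ∧
        pv w ∩ B = ∅ := by
  refine ⟨Bool, false, true, by simp, fun v => by cases v <;> simp,
    (fun v => {v}), (fun v => {v}), cjPi, Set.univ, {true},
    fun v => rfl, fun v => le_refl _, ?_, ?_, ?_, ?_, ?_, ?_, ?_⟩
  · -- CJ1
    intro X ⟨hne, hsub⟩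
    obtain ⟨b, hb⟩ := cjBest_nonempty hne
    exact (hsub hb).1
  · -- CJ2
    intro X Y Z h
    constructor <;> rintro ⟨hne, hsub⟩
    · exact ⟨hne, h ▸ hsub⟩
    · exact ⟨hne, h.symm ▸ hsub⟩
  · -- CJ3
    rintro X Y Z ⟨hne, hY⟩ ⟨_, hZ⟩
    exact ⟨hne, fun a ha => ⟨⟨(hY ha).1, (hZ ha).1⟩, (hY ha).2⟩⟩
  · -- CJ4
    rintro X Y Z hXY hYZ ⟨hYne, hbest⟩
    refine ⟨hYne.mono hYZ, fun a ha => ⟨?_, cjBest_subset Z ha⟩⟩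
    have haZ : a ∈ Z := cjBest_subset Z ha
    by_cases haY : a ∈ Y
    · right
      -- a ∈ cjBest Z, a ∈ Y; show a ∈ X using hbest : cjBest Y ⊆ X ∩ Y
      have : a ∈ cjBest Y := by
        unfold cjBest at ha ⊢
        by_cases ht : true ∈ Y
        · simp only [ht, if_pos]
          have htZ : true ∈ Z := hYZ ht
          simpa [htZ] using ha
        · simp only [ht, if_neg, not_false_iff]
          exact haY
      exact (hbest this).1
    · exact Or.inl ⟨haZ, haY⟩
  · -- O(B|A)
    constructor
    · intro h
      have : true ∈ (Set.univ ∩ {true} : Set Bool) := ⟨trivial, rfl⟩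
      rw [h] at this; exact this
    · intro X _ hXB
      have hne : X.Nonempty := by
        rcases Set.nonempty_iff_ne_empty.2 hXB with h
        obtain ⟨a, ha⟩ := Set.nonempty_iff_ne_empty.2 hXB
        exact ⟨a, ha.1⟩
      have ht : true ∈ X := by
        obtain ⟨a, ha, hb⟩ := Set.nonempty_iff_ne_empty.2 hXB
        have : a = true := hb
        exact this ▸ ha
      refine ⟨hne, ?_⟩
      unfold cjBest
      simp only [ht, if_pos]
      intro a ha
      have : a = true := ha
      exact ⟨this, this ▸ ht⟩
  · -- ◇A
    intro h
    have : false ∈ ({false} ∩ Set.univ : Set Bool) := ⟨rfl, trivial⟩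
    rw [h] at this; exact this
  · -- ¬◇B
    ext a
    simp only [Set.mem_inter_iff, Set.mem_singleton_iff, Set.mem_empty_iff_false, iff_false]
    rintro ⟨h1, h2⟩
    exact absurd (h1 ▸ h2) (by simp)
end

section
/- Let W be a type and let π : Set W → Set (Set W) satisfy conditions (CJ1)–(CJ4). Then for all X, Y, Z ⊆ W, if X ∈ π(Y) and X ∈ π(Z), then X ∈ π(Y ∪ Z). -/
/-- Under (CJ1)–(CJ4), if X ∈ π(Y) and X ∈ π(Z) then X ∈ π(Y ∪ Z). -/
theorem pi_union {W : Type} (π : Set W → Set (Set W))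
    (cj1 : ∀ X : Set W, (∅ : Set W) ∉ π X)
    (cj2 : ∀ X Y Z : Set W, Y ∩ X = Z ∩ X → (Y ∈ π X ↔ Z ∈ π X))
    (cj3 : ∀ X Y Z : Set W, Y ∈ π X → Z ∈ π X → Y ∩ Z ∈ π X)
    (cj4 : ∀ X Y Z : Set W, X ⊆ Y → Y ⊆ Z → X ∈ π Y → (Z \ Y) ∪ X ∈ π Z) :
    ∀ X Y Z : Set W, X ∈ π Y → X ∈ π Z → X ∈ π (Y ∪ Z) := by
  intro X Y Z hY hZ
  have hXY : X ∩ Y ∈ π Y := (cj2 Y X (X ∩ Y) (by ext w; simp; try tauto)).mp hY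
  have hXZ : X ∩ Z ∈ π Z := (cj2 Z X (X ∩ Z) (by ext w; simp; try tauto)).mp hZ
  have hA := cj4 (X ∩ Y) Y (Y ∪ Z) Set.inter_subset_right Set.subset_union_left hXY
  have hB := cj4 (X ∩ Z) Z (Y ∪ Z) Set.inter_subset_right Set.subset_union_right hXZ
  have hAB := cj3 (Y ∪ Z) _ _ hA hB
  exact (cj2 (Y ∪ Z) _ X (by ext w; simp; try tauto)).mp hAB
end

section
/- Let W be a type, π : Set W → Set (Set W) satisfy conditions (CJ1)–(CJ4), and A, B ⊆ W. Suppose the conditional obligation O(B | A) holds, and let X₀ ⊆ W be a context with X₀ ∩ A ∩ B ≠ ∅ and X₀ ∩ A ∩ Bᶜ ≠ ∅. Then Aᶜ ∪ B ∈ π(X₀) and X₀ ∩ (Aᶜ ∪ B)ᶜ ≠ ∅; that is, the material conditional A → B is obligatory in context X₀. -/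
/-- if O(B | A) holds and X₀ ∩ A ∩ B ≠ ∅ and X₀ ∩ A ∩ Bᶜ ≠ ∅,
then the material conditional A → B (truth set Aᶜ ∪ B) is obligatory in
context X₀. -/
theorem obligatory_material_conditional {W : Type} (π : Set W → Set (Set W))
    (cj1 : ∀ X : Set W, (∅ : Set W) ∉ π X)
    (cj2 : ∀ X Y Z : Set W, Y ∩ X = Z ∩ X → (Y ∈ π X ↔ Z ∈ π X))
    (cj3 : ∀ X Y Z : Set W, Y ∈ π X → Z ∈ π X → Y ∩ Z ∈ π X)
    (cj4 : ∀ X Y Z : Set W, X ⊆ Y → Y ⊆ Z → X ∈ π Y → (Z \ Y) ∪ X ∈ π Z)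
    (A B : Set W)
    (hO : A ∩ B ≠ ∅ ∧ ∀ X : Set W, X ⊆ A → X ∩ B ≠ ∅ → B ∈ π X)
    (X₀ : Set W) (h1 : X₀ ∩ A ∩ B ≠ ∅) (h2 : X₀ ∩ A ∩ Bᶜ ≠ ∅) :
    Aᶜ ∪ B ∈ π X₀ ∧ X₀ ∩ (Aᶜ ∪ B)ᶜ ≠ ∅ := by
  set Y := X₀ ∩ A with hY
  have hYA : Y ⊆ A := Set.inter_subset_right
  have hYB : Y ∩ B ≠ ∅ := by
    rw [hY]; exact h1
  have hB : B ∈ π Y := hO.2 Y hYA hYB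
  have hBY : B ∩ Y ∈ π Y := (cj2 Y (B ∩ Y) B (by rw [Set.inter_assoc, Set.inter_self])).mpr hB
  have h4 : (X₀ \ Y) ∪ (B ∩ Y) ∈ π X₀ :=
    cj4 (B ∩ Y) Y X₀ Set.inter_subset_right Set.inter_subset_left hBY
  constructor
  · refine (cj2 X₀ (Aᶜ ∪ B) ((X₀ \ Y) ∪ (B ∩ Y)) ?_).mpr h4
    ext w
    simp only [hY, Set.mem_inter_iff, Set.mem_union, Set.mem_diff, Set.mem_compl_iff]
    tauto
  · intro h
    apply h2
    rw [← h]
    ext w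
    simp only [hY, Set.mem_inter_iff, Set.mem_compl_iff, Set.mem_union]
    tauto
end

section
/- (Restricted deontic detachment.) Let W be a type, π : Set W → Set (Set W) satisfy conditions (CJ1)–(CJ4), and A, B ⊆ W. Let X₀ ⊆ W be a context such that A is obligatory in context X₀ (i.e., A ∈ π(X₀) and X₀ ∩ Aᶜ ≠ ∅), the conditional obligation O(B | A) holds, and X₀ ∩ A ∩ B ≠ ∅. Then A ∩ B is obligatory in context X₀, i.e., A ∩ B ∈ π(X₀) and X₀ ∩ (A ∩ B)ᶜ ≠ ∅. -/
/-- Restricted deontic detachment: if A is obligatory in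
context X₀, O(B | A) holds and X₀ ∩ A ∩ B ≠ ∅, then A ∩ B is obligatory in
context X₀. -/
theorem restricted_deontic_detachment {W : Type} (π : Set W → Set (Set W))
    (cj1 : ∀ X : Set W, (∅ : Set W) ∉ π X)
    (cj2 : ∀ X Y Z : Set W, Y ∩ X = Z ∩ X → (Y ∈ π X ↔ Z ∈ π X))
    (cj3 : ∀ X Y Z : Set W, Y ∈ π X → Z ∈ π X → Y ∩ Z ∈ π X)
    (cj4 : ∀ X Y Z : Set W, X ⊆ Y → Y ⊆ Z → X ∈ π Y → (Z \ Y) ∪ X ∈ π Z)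
    (A B : Set W) (X₀ : Set W)
    (hA : A ∈ π X₀ ∧ X₀ ∩ Aᶜ ≠ ∅)
    (hO : A ∩ B ≠ ∅ ∧ ∀ X : Set W, X ⊆ A → X ∩ B ≠ ∅ → B ∈ π X)
    (h : X₀ ∩ A ∩ B ≠ ∅) :
    A ∩ B ∈ π X₀ ∧ X₀ ∩ (A ∩ B)ᶜ ≠ ∅ := by
  obtain ⟨hAπ, hAne⟩ := hA
  obtain ⟨-, hOB⟩ := hO
  set Y : Set W := X₀ ∩ A with hY
  have hBY : B ∈ π Y := hOB Y (fun x hx => hx.2) (by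
    intro hc; exact h (by rw [hY] at hc; exact hc))
  have hX : B ∩ Y ∈ π Y := by
    rw [← cj2 Y B (B ∩ Y) (by rw [Set.inter_assoc, Set.inter_self])]
    exact hBY
  have h4 : (X₀ \ Y) ∪ (B ∩ Y) ∈ π X₀ :=
    cj4 (B ∩ Y) Y X₀ Set.inter_subset_right (by simp [hY]) hX
  have h3 : ((X₀ \ Y) ∪ (B ∩ Y)) ∩ A ∈ π X₀ := cj3 _ _ _ h4 hAπ
  constructor
  · rw [cj2 X₀ (A ∩ B) (((X₀ \ Y) ∪ (B ∩ Y)) ∩ A) (by ext x; simp [hY]; tauto)]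
    exact h3
  · intro hc
    apply hAne
    ext x
    simp only [Set.mem_inter_iff, Set.mem_compl_iff, Set.mem_empty_iff_false, iff_false]
    intro ⟨hx0, hxA⟩
    have : x ∈ X₀ ∩ (A ∩ B)ᶜ := ⟨hx0, by simp; intro h'; exact absurd h' hxA⟩
    rw [hc] at this; exact this
end

section
/- (Strong classicality II.) Let W be a type, π : Set W → Set (Set W) satisfy condition (CJ2), and A, B ⊆ W. Let X₀ ⊆ W be a context with X₀ ⊆ A. If B is obligatory in context X₀ (i.e., B ∈ π(X₀) and X₀ ∩ Bᶜ ≠ ∅), then A ∩ B is obligatory in context X₀ (i.e., A ∩ B ∈ π(X₀) and X₀ ∩ (A ∩ B)ᶜ ≠ ∅). -/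
/-- Strong classicality II: if X₀ ⊆ A and B is obligatory in
context X₀, then A ∩ B is obligatory in context X₀. -/
theorem strong_classicality_II {W : Type} (π : Set W → Set (Set W))
    (cj2 : ∀ X Y Z : Set W, Y ∩ X = Z ∩ X → (Y ∈ π X ↔ Z ∈ π X))
    (A B : Set W) (X₀ : Set W) (h : X₀ ⊆ A)
    (hB : B ∈ π X₀ ∧ X₀ ∩ Bᶜ ≠ ∅) :
    A ∩ B ∈ π X₀ ∧ X₀ ∩ (A ∩ B)ᶜ ≠ ∅ := by
  obtain ⟨h1, h2⟩ := hB
  constructor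
  · have heq : (A ∩ B) ∩ X₀ = B ∩ X₀ := by
      ext x; constructor
      · rintro ⟨⟨_, hb⟩, hx⟩; exact ⟨hb, hx⟩
      · rintro ⟨hb, hx⟩; exact ⟨⟨h hx, hb⟩, hx⟩
    exact (cj2 X₀ (A ∩ B) B heq).mpr h1
  · intro hc
    apply h2
    ext x
    simp only [Set.mem_inter_iff, Set.mem_compl_iff, Set.mem_empty_iff_false, iff_false]
    rintro ⟨hx, hb⟩
    have : x ∈ X₀ ∩ (A ∩ B)ᶜ := ⟨hx, fun ⟨_, hb'⟩ => hb hb'⟩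
    rw [hc] at this; exact this
end

section
/- Let W be a type and let π : Set W → Set (Set W) satisfy conditions (CJ1), (CJ2) and (CJ5). Let w ∈ W and suppose the whole set W belongs to π(W). Then π({w}) equals the collection of all sets Z ⊆ W with w ∈ Z; that is, π({w}) = U({w}), the collection of supersets of {w}. -/
/-- under (CJ1), (CJ2) and (CJ5), if W ∈ π(W) then
π({w}) = U({w}), the collection of supersets of {w}. -/
theorem pi_singleton_eq_supersets {W : Type} (π : Set W → Set (Set W))
    (cj1 : ∀ X : Set W, (∅ : Set W) ∉ π X)
    (cj2 : ∀ X Y Z : Set W, Y ∩ X = Z ∩ X → (Y ∈ π X ↔ Z ∈ π X))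
    (cj5 : ∀ X Y Z : Set W, Z ∈ π X → Y ⊆ X → Y ∩ Z ≠ ∅ → Z ∈ π Y)
    (w : W) (hW : (Set.univ : Set W) ∈ π (Set.univ : Set W)) :
    π ({w} : Set W) = {Z : Set W | ({w} : Set W) ⊆ Z} := by
  have huniv : (Set.univ : Set W) ∈ π {w} := by
    apply cj5 Set.univ {w} Set.univ hW (by simp)
    intro h
    have : w ∈ ({w} ∩ Set.univ : Set W) := by simp
    rw [h] at this; exact this
  ext Z
  constructor
  · intro hZ
    simp only [Set.mem_setOf_eq, Set.singleton_subset_iff]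
    by_contra hw
    have : (Z ∩ {w} : Set W) = ∅ ∩ {w} := by
      ext y; simp; rintro hy rfl; exact hw hy
    exact cj1 {w} ((cj2 {w} Z ∅ this).mp hZ)
  · intro hZ
    have : (Z ∩ {w} : Set W) = Set.univ ∩ {w} := by
      ext y; simp; rintro rfl; exact hZ rfl
    exact (cj2 {w} Z Set.univ this).mpr huniv
end

section
/- (The three-point model C₃ of the Chisholm set.) Let W = {x, y, z} be a set with three distinct elements, and define π : Set W → Set (Set W) by: π(∅) = π({y}) = ∅; π(S) = {Y ⊆ W : z ∈ Y} for S ∈ {{z}, {x,z}, {y,z}, {x,y,z}}; and π(S) = {Y ⊆ W : x ∈ Y} for S ∈ {{x}, {x,y}}. Let A = {z} and B = {y, z}. Then: (i) π satisfies conditions (CJ1)–(CJ4); (ii) the conditional obligations O(A | W), O(B | A), and O(Bᶜ | Aᶜ) all hold; (iii) with av(x) = {x, y} and pv(x) = W one has av(x) ⊆ Aᶜ (so ◻→¬A at x), x ∉ B (so ¬B at x), av(x) ∩ B ≠ ∅ (so ◇→B at x), and pv(x) ∩ A ∩ B ≠ ∅ (so ◇(A ∧ B) at x); and (iv) for every X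 ⊆ W, {y} ∉ π(X) (so the pragmatic oddity, where {y} = ‖¬A ∧ B‖ would be obligatory, is avoided). -/
/-- The three-point model C₃ of the Chisholm set: with
W = {x, y, z}, A = {z}, B = {y, z}, and π defined by the listed equations,
π satisfies (CJ1)–(CJ4), the conditional obligations O(A|W), O(B|A), O(Bᶜ|Aᶜ)
hold, the alethic facts at x hold with av(x) = {x,y} and pv(x) = W, and
{y} = ‖¬A ∧ B‖ belongs to no π(X) (the pragmatic oddity is avoided). -/
theorem three_point_chisholm_model {W : Type} (x y z : W)
    (hxy : x ≠ y) (hxz : x ≠ z) (hyz : y ≠ z)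
    (hcover : ∀ w : W, w = x ∨ w = y ∨ w = z)
    (π : Set W → Set (Set W))
    (h0 : π (∅ : Set W) = ∅)
    (hy : π ({y} : Set W) = ∅)
    (hz : π ({z} : Set W) = {Y : Set W | z ∈ Y})
    (hxz' : π ({x, z} : Set W) = {Y : Set W | z ∈ Y})
    (hyz' : π ({y, z} : Set W) = {Y : Set W | z ∈ Y})
    (hW : π (Set.univ : Set W) = {Y : Set W | z ∈ Y})
    (hx : π ({x} : Set W) = {Y : Set W | x ∈ Y})
    (hxy' : π ({x, y} : Set W) = {Y : Set W | x ∈ Y}) :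
    -- (i) π satisfies (CJ1)–(CJ4)
    (∀ X : Set W, (∅ : Set W) ∉ π X) ∧
    (∀ X Y Z : Set W, Y ∩ X = Z ∩ X → (Y ∈ π X ↔ Z ∈ π X)) ∧
    (∀ X Y Z : Set W, Y ∈ π X → Z ∈ π X → Y ∩ Z ∈ π X) ∧
    (∀ X Y Z : Set W, X ⊆ Y → Y ⊆ Z → X ∈ π Y → (Z \ Y) ∪ X ∈ π Z) ∧
    -- (ii) the conditional obligations O(A | W), O(B | A), O(Bᶜ | Aᶜ),
    -- where A = {z} and B = {y, z}
    ((Set.univ : Set W) ∩ {z} ≠ ∅ ∧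
      ∀ X : Set W, X ⊆ Set.univ → X ∩ {z} ≠ ∅ → ({z} : Set W) ∈ π X) ∧
    (({z} : Set W) ∩ {y, z} ≠ ∅ ∧
      ∀ X : Set W, X ⊆ {z} → X ∩ {y, z} ≠ ∅ → ({y, z} : Set W) ∈ π X) ∧
    ((({z} : Set W)ᶜ ∩ ({y, z} : Set W)ᶜ ≠ ∅) ∧
      ∀ X : Set W, X ⊆ ({z} : Set W)ᶜ → X ∩ ({y, z} : Set W)ᶜ ≠ ∅ →
        (({y, z} : Set W)ᶜ : Set W) ∈ π X) ∧
    -- (iii) alethic facts at x, with av(x) = {x, y} and pv(x) = univ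
    (({x, y} : Set W) ⊆ ({z} : Set W)ᶜ) ∧
    (x ∉ ({y, z} : Set W)) ∧
    (({x, y} : Set W) ∩ ({y, z} : Set W) ≠ ∅) ∧
    ((Set.univ : Set W) ∩ {z} ∩ {y, z} ≠ ∅) ∧
    -- (iv) the pragmatic oddity is avoided
    (∀ X : Set W, ({y} : Set W) ∉ π X) := by

  classical
  -- Bucket lemmas classifying π S
  have hπz : ∀ S : Set W, z ∈ S → π S = {Y : Set W | z ∈ Y} := by
    intro S hzS
    by_cases hxS : x ∈ S <;> by_cases hyS : y ∈ S
    · have : S = Set.univ := by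
        ext w; rcases hcover w with h|h|h <;> subst h <;> simp [hxS, hyS, hzS]
      rw [this, hW]
    · have : S = {x, z} := by
        ext w; rcases hcover w with h|h|h <;> subst h <;>
          simp [hxS, hyS, hzS, hxy, hxz, hyz, hxy.symm, hxz.symm, hyz.symm]
      rw [this, hxz']
    · have : S = {y, z} := by
        ext w; rcases hcover w with h|h|h <;> subst h <;>
          simp [hxS, hyS, hzS, hxy, hxz, hyz, hxy.symm, hxz.symm, hyz.symm]
      rw [this, hyz']
    · have : S = {z} := by
        ext w; rcases hcover w with h|h|h <;> subst h <;>
          simp [hxS, hyS, hzS, hxy, hxz, hyz, hxy.symm, hxz.symm, hyz.symm]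
      rw [this, hz]
  have hπx : ∀ S : Set W, z ∉ S → x ∈ S → π S = {Y : Set W | x ∈ Y} := by
    intro S hzS hxS
    by_cases hyS : y ∈ S
    · have : S = {x, y} := by
        ext w; rcases hcover w with h|h|h <;> subst h <;>
          simp [hxS, hyS, hzS, hxy, hxz, hyz, hxy.symm, hxz.symm, hyz.symm]
      rw [this, hxy']
    · have : S = {x} := by
        ext w; rcases hcover w with h|h|h <;> subst h <;>
          simp [hxS, hyS, hzS, hxy, hxz, hyz, hxy.symm, hxz.symm, hyz.symm]
      rw [this, hx]
  have hπ0 : ∀ S : Set W, z ∉ S → x ∉ S → π S = ∅ := by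
    intro S hzS hxS
    by_cases hyS : y ∈ S
    · have : S = {y} := by
        ext w; rcases hcover w with h|h|h <;> subst h <;>
          simp [hxS, hyS, hzS, hxy, hxz, hyz, hxy.symm, hxz.symm, hyz.symm]
      rw [this, hy]
    · have : S = ∅ := by
        ext w; rcases hcover w with h|h|h <;> subst h <;>
          simp [hxS, hyS, hzS]
      rw [this, h0]
  -- a tactic-independent case analyzer
  refine ⟨?_, ?_, ?_, ?_, ?_, ?_, ?_, ?_, ?_, ?_, ?_, ?_⟩
  · -- CJ1
    intro X h
    by_cases hzX : z ∈ X
    · rw [hπz X hzX] at h; exact h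
    · by_cases hxX : x ∈ X
      · rw [hπx X hzX hxX] at h; exact h
      · rw [hπ0 X hzX hxX] at h; exact h
  · -- CJ2
    intro X Y Z hYZ
    by_cases hzX : z ∈ X
    · rw [hπz X hzX]
      constructor <;> intro h
      · have : z ∈ Y ∩ X := ⟨h, hzX⟩
        rw [hYZ] at this; exact this.1
      · have : z ∈ Z ∩ X := ⟨h, hzX⟩
        rw [← hYZ] at this; exact this.1
    · by_cases hxX : x ∈ X
      · rw [hπx X hzX hxX]
        constructor <;> intro h
        · have : x ∈ Y ∩ X := ⟨h, hxX⟩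
          rw [hYZ] at this; exact this.1
        · have : x ∈ Z ∩ X := ⟨h, hxX⟩
          rw [← hYZ] at this; exact this.1
      · rw [hπ0 X hzX hxX]; simp
  · -- CJ3
    intro X Y Z hY hZ
    by_cases hzX : z ∈ X
    · rw [hπz X hzX] at *; exact ⟨hY, hZ⟩
    · by_cases hxX : x ∈ X
      · rw [hπx X hzX hxX] at *; exact ⟨hY, hZ⟩
      · rw [hπ0 X hzX hxX] at hY; exact absurd hY (Set.notMem_empty _)
  · -- CJ4
    intro X Y Z hXY hYZ hX
    by_cases hzZ : z ∈ Z
    · rw [hπz Z hzZ]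
      by_cases hzY : z ∈ Y
      · rw [hπz Y hzY] at hX
        exact Or.inr hX
      · exact Or.inl ⟨hzZ, hzY⟩
    · have hzY : z ∉ Y := fun h => hzZ (hYZ h)
      by_cases hxZ : x ∈ Z
      · rw [hπx Z hzZ hxZ]
        by_cases hxY : x ∈ Y
        · rw [hπx Y hzY hxY] at hX
          exact Or.inr hX
        · -- then π Y = ∅, contradiction
          rw [hπ0 Y hzY hxY] at hX
          exact absurd hX (Set.notMem_empty _)
      · have hxY : x ∉ Y := fun h => hxZ (hYZ h)
        rw [hπ0 Y hzY hxY] at hX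
        exact absurd hX (Set.notMem_empty _)
  · -- O(A|W)
    refine ⟨?_, ?_⟩
    · intro h
      have : z ∈ (Set.univ : Set W) ∩ {z} := ⟨trivial, rfl⟩
      rw [h] at this; exact this
    · intro X _ hne
      obtain ⟨w, hwX, hwz⟩ := Set.nonempty_iff_ne_empty.2 hne
      have hzX : z ∈ X := by
        have : w = z := hwz
        rwa [this] at hwX
      rw [hπz X hzX]; exact rfl
  · -- O(B|A)
    refine ⟨?_, ?_⟩
    · intro h
      have : z ∈ ({z} : Set W) ∩ {y, z} := ⟨rfl, Or.inr rfl⟩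
      rw [h] at this; exact this
    · intro X hXA hne
      obtain ⟨w, hwX, _⟩ := Set.nonempty_iff_ne_empty.2 hne
      have hzX : z ∈ X := by
        have : w = z := hXA hwX
        rwa [this] at hwX
      rw [hπz X hzX]; exact Or.inr rfl
  · -- O(Bᶜ|Aᶜ)
    refine ⟨?_, ?_⟩
    · intro h
      have : x ∈ ({z} : Set W)ᶜ ∩ ({y, z} : Set W)ᶜ := by
        constructor
        · exact fun hmem => hxz hmem
        · intro hmem; rcases hmem with h1 | h1
          · exact hxy h1
          · exact hxz h1
      rw [h] at this; exact this
    · intro X hXAc hne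
      obtain ⟨w, hwX, hwB⟩ := Set.nonempty_iff_ne_empty.2 hne
      have hw : w = x := by
        rcases hcover w with h1|h1|h1
        · exact h1
        · exact absurd (by rw [h1]; exact Or.inl rfl) hwB
        · exact absurd (by rw [h1]; exact Or.inr rfl) hwB
      have hxX : x ∈ X := by rwa [hw] at hwX
      have hzX : z ∉ X := by
        intro h1
        exact hXAc h1 rfl
      rw [hπx X hzX hxX]
      intro hmem; rcases hmem with h1 | h1
      · exact hxy h1
      · exact hxz h1
  · -- av(x) ⊆ Aᶜ
    intro w hw
    rcases hw with h1 | h1 <;> subst h1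
    · exact fun hmem => hxz hmem
    · exact fun hmem => hyz hmem
  · -- x ∉ B
    intro hmem; rcases hmem with h1 | h1
    · exact hxy h1
    · exact hxz h1
  · -- av(x) ∩ B ≠ ∅
    intro h
    have : y ∈ ({x, y} : Set W) ∩ {y, z} := ⟨Or.inr rfl, Or.inl rfl⟩
    rw [h] at this; exact this
  · -- pv(x) ∩ A ∩ B ≠ ∅
    intro h
    have : z ∈ (Set.univ : Set W) ∩ {z} ∩ {y, z} := ⟨⟨trivial, rfl⟩, Or.inr rfl⟩
    rw [h] at this; exact this
  · -- (iv)
    intro X h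
    by_cases hzX : z ∈ X
    · rw [hπz X hzX] at h
      exact hyz (Set.mem_singleton_iff.1 h).symm
    · by_cases hxX : x ∈ X
      · rw [hπx X hzX hxX] at h
        exact hxy (Set.mem_singleton_iff.1 h)
      · rw [hπ0 X hzX hxX] at h; exact h
end

section
/- (A four-point model of the extended dog–sign–fence scenario.) Let W = {a, b, c, d} be a set with four distinct elements, let A = {a, b, d}, B = {d}, C = {b}, av(a) = {a, b} and pv(a) = W. Then there exists a map π : Set W → Set (Set W) satisfying conditions (CJ1)–(CJ4) such that the following all hold: the conditional obligations O(Aᶜ | W), O(Bᶜ | Aᶜ), O(B | A), and O(C | A ∩ Bᶜ); av(a) ⊆ A ∩ Bᶜ (factual necessity of dog-and-no-sign); pv(a) ∩ Aᶜ ≠ ∅ (potential possibility of no dog); pv(a) ∩ A ∩ B ≠ ∅ (potential possibility of dog and sign); a ∉ C (no fence); and av(a) ∩ C ≠ ∅ (factual possibility of a fence). -/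
open Classical in
noncomputable def fsel {W : Type} (a b c d : W) (X : Set W) : Set W :=
  if c ∈ X then {c} else if d ∈ X then {d} else if b ∈ X then {b}
  else if a ∈ X then {a} else ∅

theorem fsel_sub {W : Type} (a b c d : W) (X : Set W) : fsel a b c d X ⊆ X := by
  unfold fsel; split_ifs <;> simp_all

theorem fsel_ne {W : Type} (a b c d : W)
    (hcover : ∀ w : W, w = a ∨ w = b ∨ w = c ∨ w = d)
    (X : Set W) (h : X.Nonempty) : (fsel a b c d X).Nonempty := by
  obtain ⟨x, hx⟩ := h
  unfold fsel; split_ifs <;> simp_all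
  rcases hcover x with h|h|h|h <;> subst h <;> tauto

theorem fsel_chern {W : Type} (a b c d : W) {Y Z : Set W} (hYZ : Y ⊆ Z)
    {z : W} (hz : z ∈ fsel a b c d Z) (hzY : z ∈ Y) : z ∈ fsel a b c d Y := by
  unfold fsel at *
  split_ifs at hz ⊢ <;> simp_all <;> subst hz <;>
    first
    | rfl
    | (exfalso; solve_by_elim)

theorem fsel_c {W : Type} (a b c d : W) {X : Set W} (h : c ∈ X) :
    fsel a b c d X = {c} := by unfold fsel; simp [h]

theorem fsel_d {W : Type} (a b c d : W) {X : Set W} (hc : c ∉ X) (h : d ∈ X) :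
    fsel a b c d X = {d} := by unfold fsel; simp [h, hc]

theorem fsel_b {W : Type} (a b c d : W) {X : Set W} (hc : c ∉ X) (hd : d ∉ X)
    (h : b ∈ X) : fsel a b c d X = {b} := by unfold fsel; simp [h, hc, hd]

/-- A four-point model of the extended dog–sign–fence scenario:
with W = {a, b, c, d}, A = {a, b, d}, B = {d}, C = {b}, av(a) = {a, b} and
pv(a) = W, there is a π satisfying (CJ1)–(CJ4) making the four conditional
obligations O(Aᶜ|W), O(Bᶜ|Aᶜ), O(B|A), O(C|A ∩ Bᶜ) true, together with the
stated alethic facts at a. -/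
theorem four_point_dog_sign_fence_model {W : Type} (a b c d : W)
    (hab : a ≠ b) (hac : a ≠ c) (had : a ≠ d)
    (hbc : b ≠ c) (hbd : b ≠ d) (hcd : c ≠ d)
    (hcover : ∀ w : W, w = a ∨ w = b ∨ w = c ∨ w = d) :
    ∃ π : Set W → Set (Set W),
      (∀ X : Set W, (∅ : Set W) ∉ π X) ∧
      (∀ X Y Z : Set W, Y ∩ X = Z ∩ X → (Y ∈ π X ↔ Z ∈ π X)) ∧
      (∀ X Y Z : Set W, Y ∈ π X → Z ∈ π X → Y ∩ Z ∈ π X) ∧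
      (∀ X Y Z : Set W, X ⊆ Y → Y ⊆ Z → X ∈ π Y → (Z \ Y) ∪ X ∈ π Z) ∧
      -- O(Aᶜ | W), where A = {a, b, d}
      ((Set.univ : Set W) ∩ ({a, b, d} : Set W)ᶜ ≠ ∅ ∧
        ∀ X : Set W, X ⊆ Set.univ → X ∩ ({a, b, d} : Set W)ᶜ ≠ ∅ →
          (({a, b, d} : Set W)ᶜ : Set W) ∈ π X) ∧
      -- O(Bᶜ | Aᶜ), where B = {d}
      ((({a, b, d} : Set W)ᶜ ∩ ({d} : Set W)ᶜ ≠ ∅) ∧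
        ∀ X : Set W, X ⊆ ({a, b, d} : Set W)ᶜ → X ∩ ({d} : Set W)ᶜ ≠ ∅ →
          (({d} : Set W)ᶜ : Set W) ∈ π X) ∧
      -- O(B | A)
      (({a, b, d} : Set W) ∩ ({d} : Set W) ≠ ∅ ∧
        ∀ X : Set W, X ⊆ ({a, b, d} : Set W) → X ∩ ({d} : Set W) ≠ ∅ →
          ({d} : Set W) ∈ π X) ∧
      -- O(C | A ∩ Bᶜ), where C = {b}
      ((({a, b, d} : Set W) ∩ ({d} : Set W)ᶜ) ∩ ({b} : Set W) ≠ ∅ ∧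
        ∀ X : Set W, X ⊆ ({a, b, d} : Set W) ∩ ({d} : Set W)ᶜ →
          X ∩ ({b} : Set W) ≠ ∅ → ({b} : Set W) ∈ π X) ∧
      -- alethic facts at world a, with av(a) = {a, b} and pv(a) = univ
      (({a, b} : Set W) ⊆ ({a, b, d} : Set W) ∩ ({d} : Set W)ᶜ) ∧
      ((Set.univ : Set W) ∩ ({a, b, d} : Set W)ᶜ ≠ ∅) ∧
      ((Set.univ : Set W) ∩ ({a, b, d} : Set W) ∩ ({d} : Set W) ≠ ∅) ∧
      (a ∉ ({b} : Set W)) ∧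
      (({a, b} : Set W) ∩ ({b} : Set W) ≠ ∅) := by
  refine ⟨fun X => {Y | (fsel a b c d X).Nonempty ∧ fsel a b c d X ⊆ Y},
    ?_, ?_, ?_, ?_, ?_, ?_, ?_, ?_, ?_, ?_, ?_, ?_, ?_⟩
  · rintro X ⟨⟨x, hx⟩, hsub⟩
    exact hsub hx
  · rintro X Y Z h
    have key : ∀ U V : Set W, U ∩ X = V ∩ X → fsel a b c d X ⊆ U → fsel a b c d X ⊆ V := by
      intro U V h hU w hw
      have hwX := fsel_sub a b c d X hw
      have : w ∈ U ∩ X := ⟨hU hw, hwX⟩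
      rw [h] at this
      exact this.1
    exact ⟨fun ⟨hn, hs⟩ => ⟨hn, key Y Z h hs⟩, fun ⟨hn, hs⟩ => ⟨hn, key Z Y h.symm hs⟩⟩
  · rintro X Y Z ⟨hn, hY⟩ ⟨_, hZ⟩
    exact ⟨hn, fun w hw => ⟨hY hw, hZ hw⟩⟩
  · rintro X Y Z hXY hYZ ⟨hn, hsub⟩
    have hYne : Y.Nonempty := hn.mono (fsel_sub a b c d Y)
    refine ⟨fsel_ne a b c d hcover Z (hYne.mono hYZ), fun z hz => ?_⟩
    by_cases hzY : z ∈ Y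
    · exact Or.inr (hsub (fsel_chern a b c d hYZ hz hzY))
    · exact Or.inl ⟨fsel_sub a b c d Z hz, hzY⟩
  · constructor
    · intro h
      have : c ∈ (Set.univ : Set W) ∩ ({a, b, d} : Set W)ᶜ := by
        simp [hac.symm, hbc.symm, hcd]
      simp [h] at this
    · intro X _ hX
      obtain ⟨x, hxX, hxA⟩ := Set.nonempty_iff_ne_empty.mpr hX
      have hxc : x = c := by
        rcases hcover x with h|h|h|h <;> simp_all
      rw [hxc] at hxX
      simp only [Set.mem_setOf_eq]
      rw [fsel_c a b c d hxX]
      exact ⟨⟨c, rfl⟩, by simp [hac.symm, hbc.symm, hcd]⟩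
  · constructor
    · intro h
      have : c ∈ ({a, b, d} : Set W)ᶜ ∩ ({d} : Set W)ᶜ := by
        simp [hac.symm, hbc.symm, hcd]
      simp [h] at this
    · intro X hXA hX
      obtain ⟨x, hxX, hxB⟩ := Set.nonempty_iff_ne_empty.mpr hX
      have hxc : x = c := by
        have := hXA hxX
        rcases hcover x with h|h|h|h <;> simp_all
      rw [hxc] at hxX
      simp only [Set.mem_setOf_eq]
      rw [fsel_c a b c d hxX]
      exact ⟨⟨c, rfl⟩, by simp [hcd.symm]⟩
  · constructor
    · intro h
      have : d ∈ ({a, b, d} : Set W) ∩ ({d} : Set W) := by simp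
      simp [h] at this
    · intro X hXA hX
      obtain ⟨x, hxX, hxB⟩ := Set.nonempty_iff_ne_empty.mpr hX
      have hxd : x = d := hxB
      rw [hxd] at hxX
      have hcX : c ∉ X := fun hc => by
        have := hXA hc; simp [hac.symm, hbc.symm, hcd] at this
      simp only [Set.mem_setOf_eq]
      rw [fsel_d a b c d hcX hxX]
      exact ⟨⟨d, rfl⟩, by simp⟩
  · constructor
    · intro h
      have : b ∈ (({a, b, d} : Set W) ∩ ({d} : Set W)ᶜ) ∩ ({b} : Set W) := by
        simp [hbd]
      simp [h] at this
    · intro X hXA hX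
      obtain ⟨x, hxX, hxC⟩ := Set.nonempty_iff_ne_empty.mpr hX
      have hxb : x = b := hxC
      rw [hxb] at hxX
      have hcX : c ∉ X := fun hc => by
        have := hXA hc; simp [hac.symm, hbc.symm, hcd] at this
      have hdX : d ∉ X := fun hd => by
        have := hXA hd; simp at this
      simp only [Set.mem_setOf_eq]
      rw [fsel_b a b c d hcX hdX hxX]
      exact ⟨⟨b, rfl⟩, by simp⟩
  · intro w hw
    rcases hw with h|h <;> subst h <;> simp [had, hbd]
  · intro h
    have : c ∈ (Set.univ : Set W) ∩ ({a, b, d} : Set W)ᶜ := by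
      simp [hac.symm, hbc.symm, hcd]
    simp [h] at this
  · intro h
    apply Set.eq_empty_iff_forall_notMem.mp h d
    simp
  · simp [hab]
  · intro h
    have : b ∈ ({a, b} : Set W) ∩ ({b} : Set W) := by simp
    simp [h] at this
end

section
/- (The schema M contradicts violability.) Let W be a type, π : Set W → Set (Set W), and X₀ ⊆ W a context. Suppose the monotonicity schema M holds in context X₀: for all Y, Z ⊆ W, if Y ∩ Z is obligatory in context X₀ (i.e., Y ∩ Z ∈ π(X₀) and X₀ ∩ (Y ∩ Z)ᶜ ≠ ∅), then Y is obligatory in context X₀ (i.e., Y ∈ π(X₀) and X₀ ∩ Yᶜ ≠ ∅). Then no set A ⊆ W is obligatory in context X₀: there is no A with A ∈ π(X₀) and X₀ ∩ Aᶜ ≠ ∅. -/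
/-- the schema M contradicts violability: if M holds in context
X₀ then nothing is obligatory in context X₀. -/
theorem schema_M_contradicts_violability {W : Type}
    (π : Set W → Set (Set W)) (X₀ : Set W)
    (hM : ∀ Y Z : Set W, (Y ∩ Z ∈ π X₀ ∧ X₀ ∩ (Y ∩ Z)ᶜ ≠ ∅) →
      (Y ∈ π X₀ ∧ X₀ ∩ Yᶜ ≠ ∅)) :
    ¬ ∃ A : Set W, A ∈ π X₀ ∧ X₀ ∩ Aᶜ ≠ ∅ := by
  rintro ⟨A, hA, hV⟩
  have := hM Set.univ A ⟨by simpa using hA, by simpa using hV⟩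
  simp at this
end
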